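/- Let T be the n×n matrix with entries T_{jk} = 1 + sgn(j−k). For index sets I = {i_1 < … < i_k} and J = {j_1 < … < j_k} ⊆ {1,…,n}, the minor det T_{JI} (rows J, columns I) equals 2^{p(I,J)} if I interlaces with J (meaning i_1 ≤ j_1 ≤ i_2 ≤ j_2 ≤ … ≤ i_k ≤ j_k), and equals 0 otherwise, where p(I,J) = |I \ (I ∩ J)|. -/

import Mathlib

open Matrix

/-- The lower triangular matrix with `T j k = 1 + sgn (j - k)`. -/
def lowerT (n : ℕ) (R : Type*) [CommRing R] : Matrix (Fin n) (Fin n) R :=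
  fun j k => if j = k then 1 else if k < j then 2 else 0

/-- `I` interlaces with `J`: `i₁ ≤ j₁ ≤ i₂ ≤ j₂ ≤ … ≤ i_k ≤ j_k`. -/
def Interlaces {n k : ℕ} (I J : Finset (Fin n)) (hI : I.card = k) (hJ : J.card = k) : Prop :=
  (∀ m : Fin k, I.orderEmbOfFin hI m ≤ J.orderEmbOfFin hJ m) ∧
  (∀ m : Fin k, ∀ h : (m : ℕ) + 1 < k,
    J.orderEmbOfFin hJ m ≤ I.orderEmbOfFin hI ⟨(m : ℕ) + 1, h⟩)

lemma lT_eq {n : ℕ} {x y : Fin n} (h : x = y) : lowerT n ℝ x y = 1 := by simp [lowerT, h]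
lemma lT_lt {n : ℕ} {x y : Fin n} (h : y < x) : lowerT n ℝ x y = 2 := by
  simp [lowerT, h, (h.ne' : x ≠ y)]
lemma lT_gt {n : ℕ} {x y : Fin n} (h : x < y) : lowerT n ℝ x y = 0 := by
  simp [lowerT, h.ne, h.not_gt]

def interl {n k : ℕ} (i j : Fin k → Fin n) : Prop :=
  (∀ m : Fin k, i m ≤ j m) ∧
  (∀ m : Fin k, ∀ h : (m : ℕ) + 1 < k, j m ≤ i ⟨(m : ℕ) + 1, h⟩)

lemma interl_tail {n k : ℕ} (i j : Fin (k+1) → Fin n) (h0 : i 0 ≤ j 0)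
    (h1 : ∀ h : 1 < k + 1, j 0 ≤ i ⟨1, h⟩) :
    interl i j ↔ interl (fun m => i m.succ) (fun m => j m.succ) := by
  constructor
  · rintro ⟨hA, hB⟩
    refine ⟨fun m => hA m.succ, fun m h => ?_⟩
    have h' : (m.succ : ℕ) + 1 < k + 1 := by simp; omega
    have := hB m.succ h'
    convert this using 2
    ext; simp
  · rintro ⟨hA, hB⟩
    constructor
    · intro m
      induction m using Fin.cases with
      | zero => exact h0
      | succ s => exact hA s
    · intro m h
      induction m using Fin.cases with
      | zero => exact h1 h
      | succ s =>
        have h' : (s : ℕ) + 1 < k := by simpa using h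
        have := hB s h'
        convert this using 2
        ext; simp

lemma card_filter_fin_succ {k : ℕ} (P : Fin (k+1) → Prop) [DecidablePred P] :
    (Finset.univ.filter P).card =
      (if P 0 then 1 else 0) + (Finset.univ.filter fun a : Fin k => P a.succ).card := by
  rw [Finset.card_filter, Finset.card_filter, Fin.sum_univ_succ]

lemma helper_row {k : ℕ} (A : Matrix (Fin (k+1)) (Fin (k+1)) ℝ)
    (h : ∀ b : Fin (k+1), b ≠ 0 → A 0 b = 0) :
    det A = A 0 0 * det (A.submatrix Fin.succ Fin.succ) := by
  rw [det_succ_row_zero, Finset.sum_eq_single 0]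
  · simp
  · intro b _ hb; simp [h b hb]
  · simp

lemma helper_col {k : ℕ} (A : Matrix (Fin (k+1)) (Fin (k+1)) ℝ)
    (h : ∀ a : Fin (k+1), a ≠ 0 → A a 0 = 0) :
    det A = A 0 0 * det (A.submatrix Fin.succ Fin.succ) := by
  rw [det_succ_column_zero, Finset.sum_eq_single 0]
  · simp
  · intro a _ ha; simp [h a ha]
  · simp

lemma key (k : ℕ) : ∀ (n : ℕ) (i j : Fin k → Fin n), StrictMono i → StrictMono j →
    (interl i j →
      Matrix.det (Matrix.of fun a b => lowerT n ℝ (j a) (i b)) =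
        (2:ℝ) ^ (Finset.univ.filter fun a => ∀ b, i a ≠ j b).card) ∧
    (¬ interl i j →
      Matrix.det (Matrix.of fun a b => lowerT n ℝ (j a) (i b)) = 0) := by
  induction k with
  | zero =>
    intro n i j _ _
    refine ⟨fun _ => by simp [Matrix.det_fin_zero], fun h => absurd ⟨fun m => m.elim0, fun m => m.elim0⟩ h⟩
  | succ k IH =>
    intro n i j hi hj
    set M : Matrix (Fin (k+1)) (Fin (k+1)) ℝ := Matrix.of fun a b => lowerT n ℝ (j a) (i b) with hM
    rcases lt_or_ge (j 0) (i 0) with hA | hB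
    · -- Case A : row 0 is zero; not interlacing
      have hdet : M.det = 0 := by
        apply Matrix.det_eq_zero_of_row_eq_zero 0
        intro b
        exact lT_gt (lt_of_lt_of_le hA (hi.monotone (Fin.zero_le b)))
      exact ⟨fun h => absurd (h.1 0) (not_le.2 hA), fun _ => hdet⟩
    by_cases hC : ∃ h1 : 1 < k + 1, i ⟨1, h1⟩ < j 0
    · -- Case B1 : columns 0 and 1 are equal; not interlacing
      obtain ⟨h1, hC⟩ := hC
      have hdet : M.det = 0 := by
        apply Matrix.det_zero_of_column_eq (i := (0 : Fin (k+1))) (j := ⟨1, h1⟩)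
        · intro h
          have := congrArg Fin.val h
          simp at this
        · intro a
          have hj0a : j 0 ≤ j a := hj.monotone (Fin.zero_le a)
          have e1 : i 0 < j a :=
            lt_of_le_of_lt (hi.monotone (Fin.zero_le ⟨1, h1⟩)) (lt_of_lt_of_le hC hj0a)
          have e2 : i ⟨1, h1⟩ < j a := lt_of_lt_of_le hC hj0a
          show lowerT n ℝ (j a) (i 0) = lowerT n ℝ (j a) (i ⟨1, h1⟩)
          rw [lT_lt e1, lT_lt e2]
      refine ⟨fun h => ?_, fun _ => hdet⟩
      · have h0 : ((0 : Fin (k+1)) : ℕ) + 1 < k + 1 := by simpa using h1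
        have := h.2 0 h0
        have heq : (⟨((0 : Fin (k+1)) : ℕ) + 1, h0⟩ : Fin (k+1)) = ⟨1, h1⟩ := by ext; simp
        rw [heq] at this
        exact absurd this (not_le.2 hC)
    -- Case B2
    have hC' : ∀ h1 : 1 < k + 1, j 0 ≤ i ⟨1, h1⟩ := fun h1 =>
      le_of_not_gt fun hlt => hC ⟨h1, hlt⟩
    have hiff := interl_tail i j hB hC'
    have hIH := IH n (fun m => i m.succ) (fun m => j m.succ)
      (hi.comp Fin.strictMono_succ) (hj.comp Fin.strictMono_succ)
    have hsub : M.submatrix Fin.succ Fin.succ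
        = Matrix.of (fun a b => lowerT n ℝ (j a.succ) (i b.succ)) := rfl
    rcases eq_or_lt_of_le hB with hE | hE
    · -- Case B2a : i 0 = j 0
      have hdet : M.det = M 0 0 * det (M.submatrix Fin.succ Fin.succ) := by
        apply helper_row
        intro b hb
        have hlt : j 0 < i b := by rw [← hE]; exact hi (Fin.pos_of_ne_zero hb)
        exact lT_gt hlt
      have hM00 : M 0 0 = 1 := lT_eq hE.symm
      have hP0 : ¬ (∀ b : Fin (k+1), i 0 ≠ j b) := fun h => h 0 hE
      have hcard : (Finset.univ.filter fun a : Fin (k+1) => ∀ b, i a ≠ j b).card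
          = (Finset.univ.filter fun a : Fin k => ∀ b : Fin k, i a.succ ≠ j b.succ).card := by
        rw [card_filter_fin_succ, if_neg hP0, zero_add]
        apply congrArg Finset.card
        apply Finset.filter_congr
        intro a _
        constructor
        · intro h b; exact h b.succ
        · intro h b
          induction b using Fin.cases with
          | zero => rw [← hE]; exact fun e => (Fin.succ_ne_zero a) (hi.injective e)
          | succ s => exact h s
      refine ⟨fun h => ?_, fun h => ?_⟩
      · rw [hdet, hM00, one_mul, hsub, hIH.1 (hiff.mp h), hcard]
      · rw [hdet, hsub, hIH.2 (fun h' => h (hiff.mpr h')), mul_zero]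
    by_cases hD : ∃ h1 : 1 < k + 1, j 0 = i ⟨1, h1⟩
    · -- Case B2c : i 0 < j 0 = i 1
      obtain ⟨h1, hD⟩ := hD
      obtain ⟨k', rfl⟩ : ∃ k', k = k' + 1 := ⟨k - 1, by omega⟩
      set c : Fin (k'+2) := ⟨1, h1⟩ with hc
      set M' : Matrix (Fin (k'+2)) (Fin (k'+2)) ℝ :=
        M.updateCol 0 (fun a => M a 0 + (-1 : ℝ) • M a c) with hM'
      have hne : (0 : Fin (k'+2)) ≠ c := by
        intro h; have := congrArg Fin.val h; simp [hc] at this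
      have hdet1 : M'.det = M.det := Matrix.det_updateCol_add_smul_self M hne (-1)
      have hcol : ∀ a : Fin (k'+2), a ≠ 0 → M' a 0 = 0 := by
        intro a ha
        have h0a : j 0 < j a := hj (Fin.pos_of_ne_zero ha)
        have e1 : M a 0 = 2 := lT_lt (lt_of_le_of_lt hB h0a)
        have e2 : M a c = 2 := by
          show lowerT n ℝ (j a) (i c) = 2
          rw [← hD]; exact lT_lt h0a
        simp [hM', Matrix.updateCol_self, e1, e2]
      have hM'00 : M' 0 0 = 1 := by
        have e1 : M 0 0 = 2 := lT_lt hE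
        have e2 : M 0 c = 1 := lT_eq hD
        simp [hM', Matrix.updateCol_self, e1, e2]
        norm_num
      have hsub' : M'.submatrix Fin.succ Fin.succ = M.submatrix Fin.succ Fin.succ := by
        ext a b
        simp [hM', Matrix.updateCol_ne (Fin.succ_ne_zero b)]
      have hdet : M.det = det (M.submatrix Fin.succ Fin.succ) := by
        rw [← hdet1, helper_col M' hcol, hM'00, one_mul, hsub']
      have hzc : (0 : Fin (k'+1)).succ = c := by ext; simp [hc]
      have hP0 : (∀ b : Fin (k'+2), i 0 ≠ j b) := fun b =>
        ne_of_lt (lt_of_lt_of_le hE (hj.monotone (Fin.zero_le b)))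
      have hP1 : ¬ (∀ b : Fin (k'+2), i ((0 : Fin (k'+1)).succ) ≠ j b) := by
        intro h
        exact h 0 (by rw [hzc]; exact hD.symm)
      have hP0' : (∀ b : Fin (k'+1), i ((0 : Fin (k'+1)).succ) ≠ j b.succ) := by
        intro b
        rw [hzc, ← hD]
        exact (hj (Fin.succ_pos b)).ne
      have hcard : (Finset.univ.filter fun a : Fin (k'+2) => ∀ b, i a ≠ j b).card
          = (Finset.univ.filter fun a : Fin (k'+1) => ∀ b : Fin (k'+1), i a.succ ≠ j b.succ).card := by
        rw [card_filter_fin_succ, if_pos hP0,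
            card_filter_fin_succ (fun a : Fin (k'+1) => ∀ b, i a.succ ≠ j b), if_neg hP1,
            card_filter_fin_succ (fun a : Fin (k'+1) => ∀ b : Fin (k'+1), i a.succ ≠ j b.succ),
            if_pos hP0', zero_add]
        congr 1
        apply congrArg Finset.card
        apply Finset.filter_congr
        intro a _
        constructor
        · intro h b; exact h b.succ
        · intro h b
          induction b using Fin.cases with
          | zero =>
            rw [hD]
            intro e
            have := congrArg Fin.val (hi.injective e)
            simp [hc] at this
          | succ s => exact h s
      refine ⟨fun h => ?_, fun h => ?_⟩
      · rw [hdet, hsub, hIH.1 (hiff.mp h), hcard]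
      · rw [hdet, hsub, hIH.2 (fun h' => h (hiff.mpr h'))]
    · -- Case B2b : i 0 < j 0 < i 1
      have hstrict : ∀ h1 : 1 < k + 1, j 0 < i ⟨1, h1⟩ := fun h1 =>
        lt_of_le_of_ne (hC' h1) fun e => hD ⟨h1, e⟩
      have hrow : ∀ b : Fin (k+1), b ≠ 0 → j 0 < i b := by
        intro b hb
        have hbv : 1 ≤ (b : ℕ) := Nat.one_le_iff_ne_zero.2 (by
          intro h0; exact hb (by ext; simp [h0]))
        have hb1 : 1 < k + 1 := lt_of_le_of_lt hbv b.isLt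
        exact lt_of_lt_of_le (hstrict hb1)
          (hi.monotone (show (⟨1, hb1⟩ : Fin (k+1)) ≤ b by simpa [Fin.le_def] using hbv))
      have hdet : M.det = M 0 0 * det (M.submatrix Fin.succ Fin.succ) := by
        apply helper_row
        intro b hb
        exact lT_gt (hrow b hb)
      have hM00 : M 0 0 = 2 := lT_lt hE
      have hP0 : (∀ b : Fin (k+1), i 0 ≠ j b) := fun b =>
        ne_of_lt (lt_of_lt_of_le hE (hj.monotone (Fin.zero_le b)))
      have hcard : (Finset.univ.filter fun a : Fin (k+1) => ∀ b, i a ≠ j b).card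
          = 1 + (Finset.univ.filter fun a : Fin k => ∀ b : Fin k, i a.succ ≠ j b.succ).card := by
        rw [card_filter_fin_succ, if_pos hP0]
        congr 1
        apply congrArg Finset.card
        apply Finset.filter_congr
        intro a _
        constructor
        · intro h b; exact h b.succ
        · intro h b
          induction b using Fin.cases with
          | zero => exact (hrow a.succ (Fin.succ_ne_zero a)).ne'
          | succ s => exact h s
      refine ⟨fun h => ?_, fun h => ?_⟩
      · rw [hdet, hM00, hsub, hIH.1 (hiff.mp h), hcard, pow_add, pow_one]
      · rw [hdet, hsub, hIH.2 (fun h' => h (hiff.mpr h')), mul_zero]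

/-- Minors of `T`: `det T_{JI} = 2^{p(I,J)}` if `I ≤ J` (interlacing), `0` otherwise. -/
theorem minors_of_T (n k : ℕ) (I J : Finset (Fin n)) (hI : I.card = k) (hJ : J.card = k) :
    (Interlaces I J hI hJ →
      Matrix.det ((lowerT n ℝ).submatrix (J.orderEmbOfFin hJ) (I.orderEmbOfFin hI)) =
        2 ^ (I \ (I ∩ J)).card) ∧
    (¬ Interlaces I J hI hJ →
      Matrix.det ((lowerT n ℝ).submatrix (J.orderEmbOfFin hJ) (I.orderEmbOfFin hI)) = 0) := by
  classical
  set i : Fin k → Fin n := fun m => I.orderEmbOfFin hI m with hidef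
  set j : Fin k → Fin n := fun m => J.orderEmbOfFin hJ m with hjdef
  have hi : StrictMono i := (I.orderEmbOfFin hI).strictMono
  have hj : StrictMono j := (J.orderEmbOfFin hJ).strictMono
  have hkey := key k n i j hi hj
  have hrangeJ : ∀ x : Fin n, x ∈ J ↔ ∃ b, j b = x := by
    intro x
    constructor
    · intro hx
      have hx' : x ∈ Set.range (J.orderEmbOfFin hJ) := by
        rw [Finset.range_orderEmbOfFin]; exact hx
      exact hx'
    · rintro ⟨b, rfl⟩; exact J.orderEmbOfFin_mem hJ b
  have hrangeI : ∀ x : Fin n, x ∈ I ↔ ∃ a, i a = x := by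
    intro x
    constructor
    · intro hx
      have hx' : x ∈ Set.range (I.orderEmbOfFin hI) := by
        rw [Finset.range_orderEmbOfFin]; exact hx
      exact hx'
    · rintro ⟨a, rfl⟩; exact I.orderEmbOfFin_mem hI a
  have hsd : I \ (I ∩ J) = I \ J := Finset.sdiff_inter_self_left I J
  have hcard : (Finset.univ.filter fun a => ∀ b, i a ≠ j b).card = (I \ (I ∩ J)).card := by
    rw [hsd]
    apply Finset.card_bij (fun a _ => i a)
    · intro a ha
      simp only [Finset.mem_filter] at ha
      refine Finset.mem_sdiff.2 ⟨I.orderEmbOfFin_mem hI a, fun hxJ => ?_⟩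
      obtain ⟨b, hb⟩ := (hrangeJ (i a)).1 hxJ
      exact ha.2 b hb.symm
    · intro a1 _ a2 _ h
      exact hi.injective h
    · intro x hx
      rw [Finset.mem_sdiff] at hx
      obtain ⟨a, rfl⟩ := (hrangeI x).1 hx.1
      refine ⟨a, Finset.mem_filter.2 ⟨Finset.mem_univ a, fun b e => ?_⟩, rfl⟩
      exact hx.2 ((hrangeJ (i a)).2 ⟨b, e.symm⟩)
  have hint : Interlaces I J hI hJ ↔ interl i j := Iff.rfl
  have hmat : (lowerT n ℝ).submatrix (J.orderEmbOfFin hJ) (I.orderEmbOfFin hI)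
      = Matrix.of fun a b => lowerT n ℝ (j a) (i b) := rfl
  constructor
  · intro h
    rw [hmat, hkey.1 (hint.mp h), hcard]
  · intro h
    rw [hmat]
    exact hkey.2 fun h' => h (hint.mpr h')
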